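/- Let S ≥ 1, c > 0, and let ω̂ = (ω̂_1,...,ω̂_S) be a probability vector. Then the density of the Dirichlet distribution with parameter α̂_s = 1 + c ω̂_s, namely π(ω) = [Γ(c + S)/Π_{s=1}^S Γ(1 + c ω̂_s)] Π_{s=1}^S ω_s^{c ω̂_s}, is uniformly bounded over the simplex: π(ω) ≤ (c + S)^{c + S + 1/2} c^{-c} for all ω ∈ Δ(S). -/

import Mathlib

open Set

/-- The simplex `Δ(S)` of probability vectors in `ℝ^S`. -/
def simplexSet (S : ℕ) : Set (Fin S → ℝ) :=
  {ω | (∀ s, 0 ≤ ω s) ∧ ∑ s, ω s = 1}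

section AuxGammaBounds
open Real

private lemma myGamma_le_one {x : ℝ} (h1 : 1 ≤ x) (h2 : x ≤ 2) : Real.Gamma x ≤ 1 := by
  have h := Real.convexOn_Gamma.2 (show (1:ℝ) ∈ Ioi (0:ℝ) by norm_num)
    (show (2:ℝ) ∈ Ioi (0:ℝ) by norm_num) (by linarith : (0:ℝ) ≤ 2 - x)
    (by linarith : (0:ℝ) ≤ x - 1) (by ring)
  simp only [smul_eq_mul] at h
  rw [show (2 - x) * 1 + (x - 1) * 2 = x by ring] at h
  rw [Real.Gamma_one, Real.Gamma_two] at h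
  linarith

private lemma myGamma_upper_aux : ∀ (n : ℕ) (x : ℝ), 1 ≤ x → x ≤ n + 2 →
    Real.Gamma x ≤ x ^ x * Real.exp (1 - x) := by
  intro n
  induction n with
  | zero =>
    intro x h1 h2
    norm_num at h2
    have hx0 : (0:ℝ) < x := by linarith
    have hlog : Real.log (1/x) ≤ 1/x - 1 := Real.log_le_sub_one_of_pos (by positivity)
    rw [Real.log_div one_ne_zero (ne_of_gt hx0), Real.log_one] at hlog
    have h3 : x - 1 ≤ x * Real.log x := by
      have hxx : x * (1/x) = 1 := by field_simp
      nlinarith [mul_le_mul_of_nonneg_left hlog hx0.le, hxx]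
    have h4 : (1:ℝ) ≤ x ^ x * Real.exp (1 - x) := by
      rw [Real.rpow_def_of_pos hx0, ← Real.exp_add]
      calc (1:ℝ) = Real.exp 0 := Real.exp_zero.symm
        _ ≤ _ := Real.exp_le_exp.mpr (by linarith)
    linarith [myGamma_le_one h1 h2]
  | succ n ih =>
    intro x h1 h2
    push_cast at h2
    by_cases hx : x ≤ n + 2
    · exact ih x h1 hx
    push_neg at hx
    have hn : (0:ℝ) ≤ n := Nat.cast_nonneg n
    have hx2 : (2:ℝ) < x := by linarith
    have hx1 : (0:ℝ) < x - 1 := by linarith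
    have hx0 : (0:ℝ) < x := by linarith
    have key : Real.Gamma x = (x - 1) * Real.Gamma (x - 1) := by
      have h := Real.Gamma_add_one (ne_of_gt hx1)
      rw [sub_add_cancel] at h
      exact h
    have hih := ih (x - 1) (by linarith) (by linarith)
    have hlog : Real.log (x-1) - Real.log x ≤ (x-1)/x - 1 := by
      have h := Real.log_le_sub_one_of_pos (show (0:ℝ) < (x-1)/x by positivity)
      rwa [Real.log_div (by linarith) (by linarith)] at h
    calc Real.Gamma x = (x-1) * Real.Gamma (x-1) := key
      _ ≤ (x-1) * ((x-1) ^ (x-1) * Real.exp (1 - (x-1))) :=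
          mul_le_mul_of_nonneg_left hih (by linarith)
      _ = Real.exp (x * Real.log (x-1) + (2 - x)) := by
          rw [Real.rpow_def_of_pos hx1,
            show x * Real.log (x-1) + (2-x)
              = Real.log (x-1) + (Real.log (x-1) * (x-1) + (1 - (x-1))) by ring,
            Real.exp_add, Real.exp_log hx1, ← Real.exp_add]
      _ ≤ Real.exp (x * Real.log x + (1 - x)) := by
          apply Real.exp_le_exp.mpr
          have h := mul_le_mul_of_nonneg_left hlog hx0.le
          have hxx : x * ((x-1)/x - 1) = -1 := by field_simp; ring
          nlinarith [h, hxx]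
      _ = x ^ x * Real.exp (1 - x) := by
          rw [Real.rpow_def_of_pos hx0, ← Real.exp_add, mul_comm (Real.log x) x]

private lemma myGamma_upper {x : ℝ} (h1 : 1 ≤ x) : Real.Gamma x ≤ x ^ x * Real.exp (1 - x) :=
  myGamma_upper_aux ⌈x⌉₊ x h1 (by linarith [Nat.le_ceil x])

-- log-convexity consequence: Γ(1+t) ≥ π^{-t} for t ∈ [0,1] (in log form)
private lemma myGamma_lower_pi {t : ℝ} (h0 : 0 < t) :
    -(t * Real.log π) ≤ Real.log (Real.Gamma (1 + t)) := by
  have hd : (0:ℝ) < 2*t+1 := by linarith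
  have h := Real.convexOn_log_Gamma.2 (show (1/2:ℝ) ∈ Ioi (0:ℝ) by norm_num)
    (show 1 + t ∈ Ioi (0:ℝ) by simp; linarith)
    (show (0:ℝ) ≤ 2*t/(2*t+1) by positivity)
    (show (0:ℝ) ≤ 1/(2*t+1) by positivity)
    (by field_simp)
  simp only [Function.comp_apply, smul_eq_mul] at h
  rw [show 2*t/(2*t+1) * (1/2) + 1/(2*t+1) * (1+t) = 1 by field_simp; ring] at h
  rw [Real.Gamma_one, Real.log_one, Real.Gamma_one_half_eq,
    Real.log_sqrt Real.pi_pos.le] at h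
  have h2 := mul_le_mul_of_nonneg_left h hd.le
  rw [mul_zero, mul_add, ← mul_assoc, ← mul_assoc] at h2
  rw [show (2*t+1) * (2*t/(2*t+1)) = 2*t by field_simp] at h2
  rw [show (2*t+1) * (1/(2*t+1)) = 1 by field_simp] at h2
  nlinarith [h2]

private lemma myGamma_lower_two {t : ℝ} (h0 : 0 ≤ t) (h1 : t ≤ 1) :
    -((1-t) * Real.log 2) ≤ Real.log (Real.Gamma (1 + t)) := by
  rcases eq_or_lt_of_le h1 with h | h1
  · subst h; norm_num [show (1:ℝ)+1 = 2 by norm_num, Real.Gamma_two]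
  have hd : (0:ℝ) < 2 - t := by linarith
  have h := Real.convexOn_log_Gamma.2 (show 1 + t ∈ Ioi (0:ℝ) by simp; linarith)
    (show (3:ℝ) ∈ Ioi (0:ℝ) by norm_num)
    (show (0:ℝ) ≤ 1/(2-t) by positivity)
    (show (0:ℝ) ≤ (1-t)/(2-t) by apply div_nonneg <;> linarith)
    (by field_simp; ring)
  simp only [Function.comp_apply, smul_eq_mul] at h
  rw [show 1/(2-t) * (1+t) + (1-t)/(2-t) * 3 = 2 by field_simp; ring] at h
  have h3 : Real.Gamma 3 = 2 := by
    rw [show (3:ℝ) = (2:ℕ) + 1 by norm_num, Real.Gamma_nat_eq_factorial]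
    norm_num
  rw [Real.Gamma_two, Real.log_one, h3] at h
  have h2 := mul_le_mul_of_nonneg_left h hd.le
  rw [mul_zero, mul_add, ← mul_assoc, ← mul_assoc] at h2
  rw [show (2-t) * (1/(2-t)) = 1 by field_simp] at h2
  rw [show (2-t) * ((1-t)/(2-t)) = 1-t by field_simp] at h2
  nlinarith [h2]

private lemma myGamma_lower_base {t : ℝ} (h0 : 0 ≤ t) (h1 : t ≤ 1) :
    t ^ t * Real.exp (-t) ≤ Real.Gamma (1 + t) := by
  rcases eq_or_lt_of_le h0 with h | h0
  · rw [← h]; norm_num [Real.Gamma_one]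
  have hg : (0:ℝ) < Real.Gamma (1 + t) := Real.Gamma_pos_of_pos (by linarith)
  have hexp : t ^ t * Real.exp (-t) = Real.exp (t * Real.log t + (-t)) := by
    rw [Real.rpow_def_of_pos h0, ← Real.exp_add, mul_comm (Real.log t) t]
  rw [hexp, ← Real.exp_log hg]
  apply Real.exp_le_exp.mpr
  have hlog2 : Real.log 2 ≤ 1 := by
    linarith [Real.log_le_sub_one_of_pos (show (0:ℝ) < 2 by norm_num)]
  by_cases ht : t ≤ 1/2
  · -- use π bound
    have hb := myGamma_lower_pi h0
    have hlogpi : Real.log π ≤ 2 * Real.log 2 := by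
      calc Real.log π ≤ Real.log 4 := Real.log_le_log Real.pi_pos Real.pi_le_four
        _ = 2 * Real.log 2 := by
            rw [show (4:ℝ) = 2^(2:ℕ) by norm_num, Real.log_pow]; push_cast; ring
    have hlt : Real.log t ≤ Real.log (1/2) := Real.log_le_log h0 ht
    rw [Real.log_div one_ne_zero (by norm_num), Real.log_one] at hlt
    -- t log t - t ≤ -t log π
    have hkey : Real.log t + Real.log π ≤ 1 := by linarith
    nlinarith [hb, hkey, h0]
  · push_neg at ht
    have hb := myGamma_lower_two h0.le h1
    have hlt : Real.log t ≤ 0 := Real.log_nonpos h0.le h1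
    nlinarith [hb, hlt, h0, hlog2]

private lemma myGamma_lower_aux : ∀ (n : ℕ) (t : ℝ), 0 ≤ t → t ≤ n + 1 →
    t ^ t * Real.exp (-t) ≤ Real.Gamma (1 + t) := by
  intro n
  induction n with
  | zero => intro t h0 h1; norm_num at h1; exact myGamma_lower_base h0 h1
  | succ n ih =>
    intro t h0 h2
    push_cast at h2
    by_cases ht : t ≤ n + 1
    · exact ih t h0 ht
    push_neg at ht
    have hn : (0:ℝ) ≤ n := Nat.cast_nonneg n
    have ht1 : (1:ℝ) < t := by linarith
    have hu : (0:ℝ) < t - 1 := by linarith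
    have ht0 : (0:ℝ) < t := by linarith
    have key : Real.Gamma (1 + t) = t * Real.Gamma (1 + (t - 1)) := by
      rw [show 1 + (t-1) = t by ring, show 1 + t = t + 1 by ring]
      exact Real.Gamma_add_one (ne_of_gt ht0)
    have hih := ih (t - 1) hu.le (by linarith)
    have hlog : Real.log (t/(t-1)) ≤ t/(t-1) - 1 :=
      Real.log_le_sub_one_of_pos (by positivity)
    rw [Real.log_div (by linarith) (by linarith)] at hlog
    have hr : t/(t-1) - 1 = 1/(t-1) := by field_simp; ring
    rw [hr] at hlog
    -- (t-1) * (log t - log (t-1)) ≤ 1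
    have h2' := mul_le_mul_of_nonneg_left hlog hu.le
    rw [show (t-1) * (1/(t-1)) = 1 by field_simp] at h2'
    calc t ^ t * Real.exp (-t) = Real.exp (t * Real.log t + (-t)) := by
          rw [Real.rpow_def_of_pos ht0, ← Real.exp_add, mul_comm (Real.log t) t]
      _ ≤ Real.exp (Real.log t + ((t-1) * Real.log (t-1) + (-(t-1)))) := by
          apply Real.exp_le_exp.mpr
          nlinarith [h2']
      _ = t * ((t-1) ^ (t-1) * Real.exp (-(t-1))) := by
          rw [Real.exp_add, Real.exp_log ht0, Real.rpow_def_of_pos hu,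
            ← Real.exp_add, mul_comm (Real.log (t-1)) (t-1)]
      _ ≤ t * Real.Gamma (1 + (t-1)) := mul_le_mul_of_nonneg_left hih ht0.le
      _ = Real.Gamma (1 + t) := key.symm

private lemma myGamma_lower {t : ℝ} (h0 : 0 ≤ t) :
    t ^ t * Real.exp (-t) ≤ Real.Gamma (1 + t) :=
  myGamma_lower_aux ⌈t⌉₊ t h0 (by linarith [Nat.le_ceil t])

end AuxGammaBounds

/-- **Uniform bound on the Dirichlet density.**  For `S ≥ 1`, `c > 0` and a probability
vector `ω̂`, the `Dir_S(1 + c ω̂)` density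
`π(ω) = [Γ(c + S)/Π_s Γ(1 + c ω̂_s)] Π_s ω_s^{c ω̂_s}` satisfies
`π(ω) ≤ (c + S)^{c + S + 1/2} c^{-c}` for every `ω ∈ Δ(S)`. -/
theorem dirichlet_density_uniform_bound
    (S : ℕ) (hS : 1 ≤ S) (c : ℝ) (hc : 0 < c)
    (ωhat : Fin S → ℝ) (hωhat : ωhat ∈ simplexSet S) :
    ∀ ω ∈ simplexSet S,
      Real.Gamma (c + S) / (∏ s, Real.Gamma (1 + c * ωhat s)) * ∏ s, ω s ^ (c * ωhat s) ≤
        (c + S) ^ (c + S + 1 / 2) * c ^ (-c) := by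
  obtain ⟨hp0, hp1⟩ := hωhat
  intro ω hω
  obtain ⟨ho0, ho1⟩ := hω
  have hS1 : (1:ℝ) ≤ (S:ℝ) := by exact_mod_cast hS
  set x : ℝ := c + S with hxdef
  have hx1 : 1 ≤ x := by rw [hxdef]; linarith
  have hx0 : 0 < x := by linarith
  have hΓpos : 0 < Real.Gamma x := Real.Gamma_pos_of_pos hx0
  have hw0 : ∀ s, 0 ≤ c * ωhat s := fun s => mul_nonneg hc.le (hp0 s)
  -- positivity of R
  have hfR : ∀ s, 0 < (ωhat s) ^ (c * ωhat s) := by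
    intro s
    rcases eq_or_lt_of_le (hp0 s) with h | h
    · rw [← h, mul_zero, Real.rpow_zero]; norm_num
    · exact Real.rpow_pos_of_pos h _
  have hR : 0 < ∏ s, (ωhat s) ^ (c * ωhat s) := Finset.prod_pos fun s _ => hfR s
  -- Gibbs inequality, weight-1 version
  have base : (∏ s, ω s ^ (ωhat s)) ≤ ∏ s, (ωhat s) ^ (ωhat s) := by
    set z : Fin S → ℝ := fun s => if ωhat s = 0 then 1 else ω s / ωhat s with hzdef
    have hz0 : ∀ i, 0 ≤ z i := by
      intro i
      by_cases h : ωhat i = 0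
      · simp [hzdef, h]
      · simp only [hzdef, if_neg h]
        exact div_nonneg (ho0 i) (hp0 i)
    have hgm := Real.geom_mean_le_arith_mean_weighted Finset.univ ωhat z
      (fun i _ => hp0 i) hp1 (fun i _ => hz0 i)
    have hsum : ∑ i, ωhat i * z i ≤ 1 := by
      rw [← ho1]
      apply Finset.sum_le_sum
      intro i _
      by_cases h : ωhat i = 0
      · simp only [hzdef, h, zero_mul]; exact ho0 i
      · simp only [hzdef, if_neg h]
        rw [mul_comm, div_mul_cancel₀ _ h]
    have hfac : ∀ i, (ω i) ^ (ωhat i) = z i ^ (ωhat i) * (ωhat i) ^ (ωhat i) := by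
      intro i
      by_cases h : ωhat i = 0
      · simp [hzdef, h, Real.rpow_zero]
      · simp only [hzdef, if_neg h]
        rw [← Real.mul_rpow (div_nonneg (ho0 i) (hp0 i)) (hp0 i), div_mul_cancel₀ _ h]
    calc (∏ i, ω i ^ (ωhat i)) = (∏ i, z i ^ (ωhat i)) * ∏ i, (ωhat i) ^ (ωhat i) := by
          rw [← Finset.prod_mul_distrib]
          exact Finset.prod_congr rfl fun i _ => hfac i
      _ ≤ 1 * ∏ i, (ωhat i) ^ (ωhat i) := by
          apply mul_le_mul_of_nonneg_right (hgm.trans hsum)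
          exact Finset.prod_nonneg fun i _ => Real.rpow_nonneg (hp0 i) _
      _ = _ := one_mul _
  -- raising to the power c
  have hpowc : ∀ (f : Fin S → ℝ), (∀ i, 0 ≤ f i) →
      (∏ s, f s ^ (c * ωhat s)) = (∏ s, f s ^ (ωhat s)) ^ c := by
    intro f hf
    rw [← Real.finset_prod_rpow _ _ (fun i _ => Real.rpow_nonneg (hf i) _) c]
    refine Finset.prod_congr rfl fun i _ => ?_
    rw [mul_comm c (ωhat i), Real.rpow_mul (hf i)]
  have hQR : (∏ s, ω s ^ (c * ωhat s)) ≤ ∏ s, (ωhat s) ^ (c * ωhat s) := by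
    rw [hpowc ω ho0, hpowc ωhat hp0]
    exact Real.rpow_le_rpow (Finset.prod_nonneg fun i _ => Real.rpow_nonneg (ho0 i) _)
      base hc.le
  -- lower bound for the product of Gammas
  have hsumw : ∑ s, c * ωhat s = c := by rw [← Finset.mul_sum, hp1, mul_one]
  have hprodexp : (∏ s, Real.exp (-(c * ωhat s))) = Real.exp (-c) := by
    rw [← Real.exp_sum]
    congr 1
    rw [Finset.sum_neg_distrib, hsumw]
  have hprodc : (∏ s : Fin S, (c:ℝ) ^ (c * ωhat s)) = c ^ c := by
    rw [Finset.prod_congr rfl (fun s _ => Real.rpow_def_of_pos hc (c * ωhat s)),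
      ← Real.exp_sum, ← Finset.mul_sum, hsumw, ← Real.rpow_def_of_pos hc]
  have hPlow : Real.exp (-c) * (c ^ c * ∏ s, (ωhat s) ^ (c * ωhat s)) ≤
      ∏ s, Real.Gamma (1 + c * ωhat s) := by
    calc Real.exp (-c) * (c ^ c * ∏ s, (ωhat s) ^ (c * ωhat s))
        = ∏ s, ((c * ωhat s) ^ (c * ωhat s) * Real.exp (-(c * ωhat s))) := by
          rw [Finset.prod_mul_distrib, hprodexp]
          have h1 : (∏ s, (c * ωhat s) ^ (c * ωhat s)) =
              (∏ s : Fin S, (c:ℝ) ^ (c * ωhat s)) * ∏ s, (ωhat s) ^ (c * ωhat s) := by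
            rw [← Finset.prod_mul_distrib]
            exact Finset.prod_congr rfl fun s _ => Real.mul_rpow hc.le (hp0 s)
          rw [h1, hprodc]; ring
      _ ≤ ∏ s, Real.Gamma (1 + c * ωhat s) := by
          apply Finset.prod_le_prod
          · exact fun s _ => mul_nonneg (Real.rpow_nonneg (hw0 s) _) (Real.exp_pos _).le
          · exact fun s _ => myGamma_lower (hw0 s)
  -- assemble
  have hPpos : 0 < ∏ s, Real.Gamma (1 + c * ωhat s) :=
    Finset.prod_pos fun s _ => Real.Gamma_pos_of_pos (by linarith [hw0 s])
  have hQ0 : 0 ≤ ∏ s, ω s ^ (c * ωhat s) :=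
    Finset.prod_nonneg fun s _ => Real.rpow_nonneg (ho0 s) _
  have hcc : (0:ℝ) < c ^ c := Real.rpow_pos_of_pos hc c
  have hL : 0 < Real.exp (-c) * (c ^ c * ∏ s, (ωhat s) ^ (c * ωhat s)) :=
    mul_pos (Real.exp_pos _) (mul_pos hcc hR)
  have step1 : Real.Gamma x / (∏ s, Real.Gamma (1 + c * ωhat s)) * ∏ s, ω s ^ (c * ωhat s)
      ≤ Real.Gamma x / (Real.exp (-c) * (c ^ c * ∏ s, (ωhat s) ^ (c * ωhat s)))
        * ∏ s, (ωhat s) ^ (c * ωhat s) := by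
    apply mul_le_mul _ hQR hQ0 (div_nonneg hΓpos.le hL.le)
    exact (div_le_div_iff_of_pos_left hΓpos hPpos hL).mpr hPlow
  have step2 : Real.Gamma x / (Real.exp (-c) * (c ^ c * ∏ s, (ωhat s) ^ (c * ωhat s)))
      * ∏ s, (ωhat s) ^ (c * ωhat s) = Real.Gamma x * Real.exp c / c ^ c := by
    rw [Real.exp_neg]
    field_simp
  have step3 : Real.Gamma x * Real.exp c / c ^ c ≤ x ^ (x + 1/2) * c ^ (-c) := by
    rw [Real.rpow_neg hc.le, div_eq_mul_inv]
    apply mul_le_mul_of_nonneg_right _ (inv_nonneg.mpr hcc.le)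
    calc Real.Gamma x * Real.exp c ≤ (x ^ x * Real.exp (1 - x)) * Real.exp c :=
          mul_le_mul_of_nonneg_right (myGamma_upper hx1) (Real.exp_pos c).le
      _ = x ^ x * Real.exp (1 - (S:ℝ)) := by
          rw [mul_assoc, ← Real.exp_add, show 1 - x + c = 1 - (S:ℝ) by rw [hxdef]; ring]
      _ ≤ x ^ x * 1 := by
          apply mul_le_mul_of_nonneg_left _ (Real.rpow_nonneg hx0.le x)
          exact Real.exp_le_one_iff.mpr (by linarith)
      _ ≤ x ^ x * x ^ (1/2 : ℝ) := by
          apply mul_le_mul_of_nonneg_left _ (Real.rpow_nonneg hx0.le x)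
          calc (1:ℝ) = (1:ℝ) ^ (1/2 : ℝ) := (Real.one_rpow _).symm
            _ ≤ x ^ (1/2 : ℝ) := Real.rpow_le_rpow (by norm_num) hx1 (by norm_num)
      _ = x ^ (x + 1/2) := (Real.rpow_add hx0 x (1/2)).symm
  calc Real.Gamma x / (∏ s, Real.Gamma (1 + c * ωhat s)) * ∏ s, ω s ^ (c * ωhat s)
      ≤ Real.Gamma x / (Real.exp (-c) * (c ^ c * ∏ s, (ωhat s) ^ (c * ωhat s)))
        * ∏ s, (ωhat s) ^ (c * ωhat s) := step1
    _ = Real.Gamma x * Real.exp c / c ^ c := step2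
    _ ≤ x ^ (x + 1/2) * c ^ (-c) := step3
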